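/- Let X = ℓ_p^2 with 1 < p < ∞, p ≠ 2, and let T : X → X be the linear operator T(x,y) = (x+y, x−y). Let u = (1,0) and v = (1,1)/‖(1,1)‖_p. Then T preserves Birkhoff-James orthogonality at u and at v (i.e., u ⊥_B w implies Tu ⊥_B Tw, and v ⊥_B w implies Tv ⊥_B Tw), but T is not a scalar multiple of a linear isometry of X. -/

import Mathlib

/-- Birkhoff-James orthogonality. -/
def BJOrth {X : Type*} [NormedAddCommGroup X] [NormedSpace ℝ X] (x y : X) : Prop :=
  ∀ t : ℝ, ‖x‖ ≤ ‖x + t • y‖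

open Real Filter Set in
lemma aux_affine_deriv {q : ℝ} (hq : 1 < q) (a b : ℝ) :
    HasDerivAt (fun t : ℝ => |a + t * b| ^ q) (q * |a| ^ (q - 2) * a * b) 0 := by
  have hinner : HasDerivAt (fun t : ℝ => a + t * b) b 0 := by
    simpa using ((hasDerivAt_id (0:ℝ)).mul_const b).const_add a
  have := (hasDerivAt_abs_rpow (a + 0 * b) hq).comp 0 hinner
  simpa [Function.comp_def, mul_assoc, mul_comm, mul_left_comm] using this

open Real Filter Set in
lemma aux_two_le {q : ℝ} (hq : 1 ≤ q) (s : ℝ) :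
    2 ≤ |1 + s| ^ q + |1 - s| ^ q := by
  have hA : (0:ℝ) ≤ |1 + s| := abs_nonneg _
  have hB : (0:ℝ) ≤ |1 - s| := abs_nonneg _
  have hconv := (convexOn_rpow hq).2 (mem_Ici.mpr hA) (mem_Ici.mpr hB)
      (by norm_num : (0:ℝ) ≤ 1/2) (by norm_num : (0:ℝ) ≤ 1/2) (by norm_num)
  simp only [smul_eq_mul] at hconv
  have h2 : (1:ℝ) ≤ 1/2 * |1 + s| + 1/2 * |1 - s| := by
    have := abs_add_le (1 + s) (1 - s)
    have h22 : |(1:ℝ) + s + (1 - s)| = 2 := by norm_num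
    rw [h22] at this
    linarith
  have h3 : (1:ℝ) ≤ (1/2 * |1 + s| + 1/2 * |1 - s|) ^ q := by
    calc (1:ℝ) = 1 ^ q := (Real.one_rpow q).symm
    _ ≤ _ := Real.rpow_le_rpow (by norm_num) h2 (by linarith)
  have := h3.trans hconv
  linarith

open Real Filter Set in
theorem stmt_19 (p : ENNReal) (hp1 : 1 < p) [Fact (1 ≤ p)] (hptop : p ≠ ⊤) (hp2 : p ≠ 2)
    (T : PiLp p (fun _ : Fin 2 => ℝ) →L[ℝ] PiLp p (fun _ : Fin 2 => ℝ))
    (hT : ∀ w : PiLp p (fun _ : Fin 2 => ℝ),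
      (T w) 0 = w 0 + w 1 ∧ (T w) 1 = w 0 - w 1)
    (u v : PiLp p (fun _ : Fin 2 => ℝ))
    (hu : u 0 = 1 ∧ u 1 = 0)
    (e : PiLp p (fun _ : Fin 2 => ℝ)) (he : e 0 = 1 ∧ e 1 = 1)
    (hv : v = ‖e‖⁻¹ • e) :
    (∀ w, BJOrth u w → BJOrth (T u) (T w)) ∧
    (∀ w, BJOrth v w → BJOrth (T v) (T w)) ∧
    ¬ ∃ (c : ℝ) (U : PiLp p (fun _ : Fin 2 => ℝ) →ₗᵢ[ℝ] PiLp p (fun _ : Fin 2 => ℝ)),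
        ∀ w, T w = c • U w := by
  set q := p.toReal with hqdef
  have hq1 : 1 < q := by
    rw [hqdef, ← ENNReal.toReal_one]
    exact (ENNReal.toReal_lt_toReal (by simp) hptop).mpr hp1
  have hq0 : 0 < q := lt_trans zero_lt_one hq1
  -- norm formula
  have hnorm : ∀ x : PiLp p (fun _ : Fin 2 => ℝ), ‖x‖ ^ q = |x 0| ^ q + |x 1| ^ q := by
    intro x
    rw [PiLp.norm_eq_sum (by exact hq0 : 0 < p.toReal)]
    rw [← Real.rpow_mul (by positivity), one_div, inv_mul_cancel₀ hq0.ne', Real.rpow_one]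
    simp [Fin.sum_univ_two, Real.norm_eq_abs]
    rfl
  -- derivative extraction
  have hderiv : ∀ (x w : PiLp p (fun _ : Fin 2 => ℝ)), BJOrth x w →
      q * |x 0| ^ (q - 2) * x 0 * w 0 + q * |x 1| ^ (q - 2) * x 1 * w 1 = 0 := by
    intro x w hbj
    have hF : HasDerivAt (fun t : ℝ => |x 0 + t * w 0| ^ q + |x 1 + t * w 1| ^ q)
        (q * |x 0| ^ (q - 2) * x 0 * w 0 + q * |x 1| ^ (q - 2) * x 1 * w 1) 0 :=
      (aux_affine_deriv hq1 _ _).add (aux_affine_deriv hq1 _ _)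
    refine IsLocalMin.hasDerivAt_eq_zero ?_ hF
    apply Filter.Eventually.of_forall
    intro t
    have h1 := hbj t
    have h2 : ‖x‖ ^ q ≤ ‖x + t • w‖ ^ q :=
      Real.rpow_le_rpow (norm_nonneg _) h1 hq0.le
    rw [hnorm, hnorm] at h2
    simpa [PiLp.add_apply, PiLp.smul_apply, smul_eq_mul] using h2
  obtain ⟨hu0, hu1⟩ := hu
  obtain ⟨he0, he1⟩ := he
  refine ⟨?_, ?_, ?_⟩
  · -- part 1
    intro w hbj
    have h0 : w 0 = 0 := by
      have hd := hderiv u w hbj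
      rw [hu0, hu1] at hd
      simp [Real.one_rpow] at hd
      rcases hd with hd | hd
      · exact absurd hd hq0.ne'
      · exact hd
    intro t
    rw [← Real.rpow_le_rpow_iff (norm_nonneg _) (norm_nonneg _) hq0]
    rw [hnorm, hnorm]
    obtain ⟨hTu0, hTu1⟩ := hT u
    obtain ⟨hTw0, hTw1⟩ := hT w
    rw [PiLp.add_apply, PiLp.add_apply, PiLp.smul_apply, PiLp.smul_apply, smul_eq_mul,
      smul_eq_mul, hTu0, hTu1, hTw0, hTw1, hu0, hu1, h0]
    have := aux_two_le hq1.le (t * w 1)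
    have habs1 : |(1:ℝ)| ^ q = 1 := by rw [abs_one, Real.one_rpow]
    have hh1 : (1:ℝ) + 0 = 1 := by norm_num
    have hh2 : (1:ℝ) - 0 = 1 := by norm_num
    rw [hh1, hh2, habs1]
    have e1 : 1 + t * (0 + w 1) = 1 + t * w 1 := by ring
    have e2 : 1 + t * (0 - w 1) = 1 - t * w 1 := by ring
    rw [e1, e2]
    linarith
  · -- part 2
    intro w hbj
    have hepos : (0:ℝ) < ‖e‖ := by
      have : e ≠ 0 := by
        intro h
        rw [h] at he0
        simp at he0
      exact norm_pos_iff.mpr this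
    set a := ‖e‖⁻¹ with ha
    have hapos : 0 < a := inv_pos.mpr hepos
    have hv0 : v 0 = a := by rw [hv, PiLp.smul_apply, smul_eq_mul, he0, mul_one]
    have hv1 : v 1 = a := by rw [hv, PiLp.smul_apply, smul_eq_mul, he1, mul_one]
    have hsum : w 0 + w 1 = 0 := by
      have hd := hderiv v w hbj
      rw [hv0, hv1] at hd
      have hk : 0 < q * |a| ^ (q - 2) * a := by
        have : (0:ℝ) < |a| ^ (q - 2) := Real.rpow_pos_of_pos (abs_pos.mpr hapos.ne') _
        positivity
      have : q * |a| ^ (q - 2) * a * (w 0 + w 1) = 0 := by linarith [hd]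
      rcases mul_eq_zero.mp this with h | h
      · exact absurd h hk.ne'
      · exact h
    intro t
    rw [← Real.rpow_le_rpow_iff (norm_nonneg _) (norm_nonneg _) hq0]
    rw [hnorm, hnorm]
    obtain ⟨hTv0, hTv1⟩ := hT v
    obtain ⟨hTw0, hTw1⟩ := hT w
    rw [PiLp.add_apply, PiLp.add_apply, PiLp.smul_apply, PiLp.smul_apply, smul_eq_mul,
      smul_eq_mul, hTv0, hTv1, hTw0, hTw1, hv0, hv1, hsum]
    have e1 : a + a + t * 0 = a + a := by ring
    have e2 : a - a = 0 := by ring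
    rw [e1, e2]
    have h0 : |(0:ℝ)| ^ q = 0 := by rw [abs_zero, Real.zero_rpow hq0.ne']
    rw [h0]
    have : (0:ℝ) ≤ |0 + t * (w 0 - w 1)| ^ q := Real.rpow_nonneg (abs_nonneg _) _
    linarith
  · -- part 3
    rintro ⟨c, U, hU⟩
    have hnormT : ∀ w, ‖T w‖ ^ q = |c| ^ q * ‖w‖ ^ q := by
      intro w
      rw [hU w, norm_smul, Real.norm_eq_abs,
        Real.mul_rpow (abs_nonneg c) (norm_nonneg _), U.norm_map]
    -- with u
    have h1 : (2:ℝ) = |c| ^ q := by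
      have := hnormT u
      rw [hnorm, hnorm] at this
      obtain ⟨hTu0, hTu1⟩ := hT u
      rw [hTu0, hTu1, hu0, hu1] at this
      have h10 : (1:ℝ) + 0 = 1 := by norm_num
      have h11 : (1:ℝ) - 0 = 1 := by norm_num
      rw [h10, h11, abs_one, Real.one_rpow, abs_zero, Real.zero_rpow hq0.ne'] at this
      linarith
    -- with e
    have h2 : (2:ℝ) ^ q = |c| ^ q * 2 := by
      have := hnormT e
      rw [hnorm, hnorm] at this
      obtain ⟨hTe0, hTe1⟩ := hT e
      rw [hTe0, hTe1, he0, he1] at this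
      have h20 : (1:ℝ) + 1 = 2 := by norm_num
      have h21 : (1:ℝ) - 1 = 0 := by norm_num
      rw [h20, h21, abs_zero, Real.zero_rpow hq0.ne', abs_one, Real.one_rpow,
        abs_two] at this
      linarith
    have h4 : (2:ℝ) ^ q = 4 := by rw [h2, ← h1]; norm_num
    have hqq : q = 2 := by
      have hlog := congrArg Real.log h4
      rw [Real.log_rpow (by norm_num)] at hlog
      have h42 : (4:ℝ) = 2 ^ (2:ℕ) := by norm_num
      rw [h42, Real.log_pow] at hlog
      have hlog2 : Real.log 2 ≠ 0 := (Real.log_pos one_lt_two).ne'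
      have hlog' : q * Real.log 2 = 2 * Real.log 2 := by
        rw [hlog]; push_cast; ring
      exact mul_right_cancel₀ hlog2 hlog'
    apply hp2
    have h2t : (2:ENNReal).toReal = 2 := by simp
    exact (ENNReal.toReal_eq_toReal_iff' hptop (by norm_num)).mp (by rw [← hqdef, hqq, h2t])
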